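/- Let M be a maximal subgroup of a finite group G and P a normal p-subgroup of G such that G = PM, where p is a prime dividing |G|. Then P ∩ M is normal in G. -/

import Mathlib

open scoped Pointwise

/-- If `M` is a maximal subgroup of a finite group `G`, `P ⊴ G` is a `p`-subgroup and
`G = PM`, then `P ∩ M ⊴ G`. -/
theorem inf_normal_of_maximal {G : Type*} [Group G] [Finite G] (p : ℕ) (hp : p.Prime)
    (hdvd : p ∣ Nat.card G) (P M : Subgroup G) [P.Normal] (hP : IsPGroup p P)
    (hM : IsCoatom M) (hPM : (P : Set G) * (M : Set G) = Set.univ) :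
    (P ⊓ M).Normal := by
  haveI : Fact p.Prime := ⟨hp⟩
  set Q := P ⊓ M with hQ
  -- P is not contained in M
  have hPnotM : ¬ P ≤ M := by
    intro h
    apply hM.1
    ext x
    simp only [Subgroup.mem_top, iff_true]
    have hx : x ∈ (P : Set G) * M := hPM ▸ Set.mem_univ x
    rcases hx with ⟨a, ha, b, hb, rfl⟩
    exact M.mul_mem (h ha) hb
  -- M normalizes Q
  have hMle : M ≤ Subgroup.normalizer (Q : Set G) := by
    intro m hm
    rw [Subgroup.mem_normalizer_iff]
    intro g
    constructor
    · rintro ⟨hgP, hgM⟩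
      exact ⟨Subgroup.Normal.conj_mem ‹P.Normal› g hgP m,
        M.mul_mem (M.mul_mem hm hgM) (M.inv_mem hm)⟩
    · rintro ⟨hgP, hgM⟩
      constructor
      · have h1 : m⁻¹ * (m * g * m⁻¹) * m⁻¹⁻¹ = g := by group
        have := Subgroup.Normal.conj_mem ‹P.Normal› _ hgP m⁻¹
        rwa [h1] at this
      · have h2 : m⁻¹ * (m * g * m⁻¹) * m = g := by group
        have := M.mul_mem (M.mul_mem (M.inv_mem hm) hgM) hm
        rwa [h2] at this
  -- there is an element of P normalizing Q but not in M
  have hQP : Q ≤ P := inf_le_left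
  have hnc : NormalizerCondition P := by
    haveI := hP.isNilpotent
    exact normalizerCondition_of_isNilpotent
  have hlt : Q.subgroupOf P < ⊤ := by
    rw [lt_top_iff_ne_top]
    intro h
    rw [Subgroup.subgroupOf_eq_top] at h
    exact hPnotM (le_trans h inf_le_right)
  obtain ⟨x, hxn, hxq⟩ := SetLike.exists_of_lt (hnc _ hlt)
  -- x.val normalizes Q in G
  have hxnorm : (x : G) ∈ Subgroup.normalizer (Q : Set G) := by
    rw [Subgroup.mem_normalizer_iff]
    rw [Subgroup.mem_normalizer_iff] at hxn
    intro g
    constructor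
    · intro hg
      have hgP : g ∈ P := hQP hg
      have := (hxn ⟨g, hgP⟩).mp (by simpa [Subgroup.mem_subgroupOf] using hg)
      simpa [Subgroup.mem_subgroupOf] using this
    · intro hg
      have hgP : g ∈ P := by
        have h1 : (x : G)⁻¹ * ((x : G) * g * (x : G)⁻¹) * (x : G) = g := by group
        have := P.mul_mem (P.mul_mem (P.inv_mem x.2) (hQP hg)) x.2
        rwa [h1] at this
      have := (hxn ⟨g, hgP⟩).mpr (by simpa [Subgroup.mem_subgroupOf] using hg)
      simpa [Subgroup.mem_subgroupOf] using this
  have hxM : (x : G) ∉ M := by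
    intro h
    exact hxq (by simpa [Subgroup.mem_subgroupOf, hQ] using And.intro x.2 h)
  -- conclude: normalizer is above M strictly, hence = ⊤
  have : Subgroup.normalizer (Q : Set G) = ⊤ := hM.2 _ (lt_of_le_of_ne hMle (by
    intro h; exact hxM (h ▸ hxnorm)))
  exact Subgroup.normalizer_eq_top_iff.mp this
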